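/- Let p, q, r ≥ 2 be integers with 1/p + 1/q + 1/r ≤ 1, let M = max{p,q,r}, let a be a real number with a > 12M, and let t be a complex number with 0 < |t| < 1. Then for every (x,y,z) ∈ ℂ³ satisfying x^p + y^q + z^r + a·x·y·z = t and |x|² + |y|² + |z|² = 1, the two vectors ∇f(x,y,z) = (p·x^{p-1} + a·y·z, q·y^{q-1} + a·z·x, r·z^{r-1} + a·x·y) and (conj x, conj y, conj z) in ℂ³ are linearly independent over ℂ. (In particular, the unit sphere S⁵ is transverse to the level set f⁻¹(t), so V_a(1,t) = f⁻¹(t) ∩ D⁶ is a Milnor fiber.) -/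

import Mathlib

private lemma abs_sub_le'' (s t : ℂ) : ‖(s - t)‖ ≤ ‖s‖ + ‖t‖ := by
  exact norm_sub_le s t

private lemma min_sq_le (u v w : ℝ) (hu : 0 < u) (hv : 0 < v) (hw : 0 < w)
    (hs : u + v + w = 1) (huv : u ≤ v) (huw : u ≤ w) : u ^ 2 ≤ 3 * (u * v * w) := by
  have h13 : 0 ≤ 1 - 3 * u := by linarith
  nlinarith [mul_nonneg hu.le (mul_nonneg (sub_nonneg.2 huv) (sub_nonneg.2 huw)),
    mul_nonneg (mul_nonneg hu.le hu.le) h13]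

private lemma coord_ineq (α β g Pc : ℂ) (n : ℕ) (c MR : ℝ) (hc : 0 ≤ c)
    (he : α * ((n : ℂ) * g + Pc) + β * (c : ℂ) = 0)
    (hg : (n : ℝ) * ‖g‖ ≤ MR * c) :
    ‖α‖ * ‖Pc‖ ≤ ‖β‖ * c + ‖α‖ * (MR * c) ∧
    ‖β‖ * c ≤ ‖α‖ * ‖Pc‖ + ‖α‖ * (MR * c) := by
  have h : α * ((n : ℂ) * g + Pc) = -(β * (c : ℂ)) := by linear_combination he
  have hE := congrArg norm h
  rw [norm_mul, norm_neg, norm_mul, Complex.norm_real, Real.norm_eq_abs, _root_.abs_of_nonneg hc] at hE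
  have t1 : ‖Pc‖ ≤ ‖((n : ℂ) * g + Pc)‖ + (n : ℝ) * ‖g‖ := by
    have h2 := abs_sub_le'' ((n : ℂ) * g + Pc) ((n : ℂ) * g)
    rw [show (n : ℂ) * g + Pc - (n : ℂ) * g = Pc by ring] at h2
    rwa [norm_mul, Complex.norm_natCast] at h2
  have t2 : ‖((n : ℂ) * g + Pc)‖ ≤ (n : ℝ) * ‖g‖ + ‖Pc‖ := by
    have h2 := norm_add_le ((n : ℂ) * g) Pc
    rwa [norm_mul, Complex.norm_natCast] at h2
  have hA0 := norm_nonneg α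
  constructor
  · nlinarith [mul_le_mul_of_nonneg_left t1 hA0, mul_le_mul_of_nonneg_left hg hA0]
  · nlinarith [mul_le_mul_of_nonneg_left t2 hA0, mul_le_mul_of_nonneg_left hg hA0]


set_option maxHeartbeats 1000000 in
private lemma real_endgame (a M A B P S Kk N T μ uvw : ℝ)
    (hM2 : 2 ≤ M) (ha : 12*M < a) (hA : 0 < A) (hB : 0 ≤ B) (hP : 0 ≤ P)
    (hT1 : T < 1) (hN : 0 < N) (hK : 0 ≤ Kk) (hS : 0 < S)
    (hB3 : B ≤ 3*(A*P) + A*M)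
    (hμpos : 0 < μ) (hμR : A*P ≤ B*μ + A*(M*μ)) (hμsq : μ^2 ≤ 3*uvw)
    (hP2 : P^2 = a^2*uvw)
    (key1 : (3*S + Kk)*P ≤ N*T + S*M)
    (hSM : N ≤ M*S) : False := by
  have hM0 : (0:ℝ) ≤ M := by linarith
  have ha0 : 0 < a := by linarith
  have s2 : (A*P)^2 ≤ ((B + A*M)*μ)^2 := by
    refine pow_le_pow_left₀ (mul_nonneg hA.le hP) ?_ 2
    linarith [hμR]
  have e1 : A^2*P^2 = A^2*(a^2*uvw) := by rw [hP2]
  have e2 : a^2*A^2*μ^2 ≤ a^2*A^2*(3*uvw) :=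
    mul_le_mul_of_nonneg_left hμsq (by positivity)
  have s3 : a^2*A^2 ≤ 3*(B + A*M)^2 := by
    by_contra hg
    push_neg at hg
    have hprod := mul_lt_mul_of_pos_right hg (mul_pos hμpos hμpos)
    linarith [e1, e2, s2, hprod]
  have h4A : 4*(a*A) ≤ 7*(B + A*M) := by
    by_contra hcon
    push_neg at hcon
    have c0 : (0:ℝ) ≤ 7*(B + A*M) := by linarith [mul_nonneg hA.le hM0]
    linarith [s3, mul_self_lt_mul_self c0 hcon, sq_nonneg (B + A*M)]
  have hPlb : 4*a ≤ 21*P + 14*M := by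
    by_contra hcon
    push_neg at hcon
    have := mul_lt_mul_of_pos_left hcon hA
    linarith [h4A, hB3, this]
  have hNt : N*T < N := by linarith [mul_lt_mul_of_pos_left hT1 hN]
  have h6 : 3*(S*P) < 2*(M*S) := by linarith [key1, mul_nonneg hK hP, hNt, hSM]
  have h7 : 3*P < 2*M := by
    by_contra hcon
    push_neg at hcon
    linarith [h6, mul_le_mul_of_nonneg_left hcon hS.le]
  linarith

set_option maxHeartbeats 1000000 in
theorem stmt_0 (p q r : ℕ) (hp : 2 ≤ p) (hq : 2 ≤ q) (hr : 2 ≤ r)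
    (hpqr : (1 : ℝ) / p + 1 / q + 1 / r ≤ 1)
    (a : ℝ) (ha : 12 * ((max p (max q r) : ℕ) : ℝ) < a)
    (t : ℂ) (ht0 : 0 < ‖t‖) (ht1 : ‖t‖ < 1)
    (x y z : ℂ)
    (hf : x ^ p + y ^ q + z ^ r + (a : ℂ) * x * y * z = t)
    (hs : ‖x‖ ^ 2 + ‖y‖ ^ 2 + ‖z‖ ^ 2 = 1)
    (α β : ℂ)
    (h1 : α * ((p : ℂ) * x ^ (p - 1) + (a : ℂ) * y * z) + β * (starRingEnd ℂ) x = 0)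
    (h2 : α * ((q : ℂ) * y ^ (q - 1) + (a : ℂ) * z * x) + β * (starRingEnd ℂ) y = 0)
    (h3 : α * ((r : ℂ) * z ^ (r - 1) + (a : ℂ) * x * y) + β * (starRingEnd ℂ) z = 0) :
    α = 0 ∧ β = 0 := by
  have hpM : (p : ℝ) ≤ ((max p (max q r) : ℕ) : ℝ) := by
    exact_mod_cast le_max_left p (max q r)
  have hqM : (q : ℝ) ≤ ((max p (max q r) : ℕ) : ℝ) := by
    exact_mod_cast le_trans (le_max_left q r) (le_max_right p (max q r))
  have hrM : (r : ℝ) ≤ ((max p (max q r) : ℕ) : ℝ) := by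
    exact_mod_cast le_trans (le_max_right q r) (le_max_right p (max q r))
  have hM2 : (2 : ℝ) ≤ ((max p (max q r) : ℕ) : ℝ) := le_trans (by exact_mod_cast hp) hpM
  have hM0 : (0 : ℝ) ≤ ((max p (max q r) : ℕ) : ℝ) := by linarith
  have ha0 : 0 < a := by linarith
  have haC : (a : ℂ) ≠ 0 := Complex.ofReal_ne_zero.mpr (ne_of_gt ha0)
  have hp0 : (0 : ℝ) < p := by exact_mod_cast (by omega : 0 < p)
  have hq0 : (0 : ℝ) < q := by exact_mod_cast (by omega : 0 < q)
  have hr0 : (0 : ℝ) < r := by exact_mod_cast (by omega : 0 < r)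
  have hα0 : α = 0 := by
    by_contra hα
    by_cases hx : x = 0
    · by_cases hy : y = 0
      · subst hx; subst hy
        simp only [zero_pow (show p ≠ 0 by omega), zero_pow (show q ≠ 0 by omega),
          mul_zero, zero_mul, zero_add, add_zero] at hf hs
        simp only [norm_zero] at hs
        simp only [zero_pow (show (2:ℕ) ≠ 0 by omega), zero_add] at hs
        have hfac : (‖z‖ - 1) * (‖z‖ + 1) = 0 := by linear_combination hs
        have habsz : ‖z‖ = 1 := by
          rcases mul_eq_zero.1 hfac with h | h
          · linarith
          · nlinarith [norm_nonneg z]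
        have : ‖t‖ = 1 := by rw [← hf, norm_pow, habsz, one_pow]
        linarith
      · by_cases hz : z = 0
        · subst hx; subst hz
          simp only [zero_pow (show p ≠ 0 by omega), zero_pow (show r ≠ 0 by omega),
            mul_zero, zero_mul, zero_add, add_zero] at hf hs
          simp only [norm_zero] at hs
          simp only [zero_pow (show (2:ℕ) ≠ 0 by omega), zero_add, add_zero] at hs
          have hfac : (‖y‖ - 1) * (‖y‖ + 1) = 0 := by linear_combination hs
          have habsy : ‖y‖ = 1 := by
            rcases mul_eq_zero.1 hfac with h | h
            · linarith
            · nlinarith [norm_nonneg y]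
          have : ‖t‖ = 1 := by rw [← hf, norm_pow, habsy, one_pow]
          linarith
        · subst hx
          simp [zero_pow (show p - 1 ≠ 0 by omega), hα, haC, hy, hz] at h1
    · by_cases hy : y = 0
      · by_cases hz : z = 0
        · subst hy; subst hz
          simp only [zero_pow (show q ≠ 0 by omega), zero_pow (show r ≠ 0 by omega),
            mul_zero, zero_mul, zero_add, add_zero] at hf hs
          simp only [norm_zero] at hs
          simp only [zero_pow (show (2:ℕ) ≠ 0 by omega), zero_add, add_zero] at hs
          have hfac : (‖x‖ - 1) * (‖x‖ + 1) = 0 := by linear_combination hs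
          have habsx : ‖x‖ = 1 := by
            rcases mul_eq_zero.1 hfac with h | h
            · linarith
            · nlinarith [norm_nonneg x]
          have : ‖t‖ = 1 := by rw [← hf, norm_pow, habsx, one_pow]
          linarith
        · subst hy
          simp [zero_pow (show q - 1 ≠ 0 by omega), hα, haC, hx, hz] at h2
      · by_cases hz : z = 0
        · subst hz
          simp [zero_pow (show r - 1 ≠ 0 by omega), hα, haC, hx, hy] at h3
        · -- MAIN CASE : x, y, z all nonzero
          simp only [Complex.sq_norm] at hs
          have hupos : 0 < Complex.normSq x := Complex.normSq_pos.mpr hx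
          have hvpos : 0 < Complex.normSq y := Complex.normSq_pos.mpr hy
          have hwpos : 0 < Complex.normSq z := Complex.normSq_pos.mpr hz
          have hu0 := hupos.le
          have hv0 := hvpos.le
          have hw0 := hwpos.le
          have hApos : 0 < ‖α‖ := norm_pos_iff.mpr hα
          have haxle : ‖x‖ ≤ 1 := by
            nlinarith [Complex.sq_norm x, norm_nonneg x,
              sq_nonneg (‖x‖ - 1)]
          have hayle : ‖y‖ ≤ 1 := by
            nlinarith [Complex.sq_norm y, norm_nonneg y,
              sq_nonneg (‖y‖ - 1)]
          have hazle : ‖z‖ ≤ 1 := by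
            nlinarith [Complex.sq_norm z, norm_nonneg z,
              sq_nonneg (‖z‖ - 1)]
          -- powers of coordinates bounded by normSq
          have Txp : (p : ℝ) * ‖(x ^ p)‖ ≤ ((max p (max q r) : ℕ) : ℝ) * Complex.normSq x := by
            rw [norm_pow]
            have h1' : ‖x‖ ^ p ≤ Complex.normSq x := by
              calc ‖x‖ ^ p ≤ ‖x‖ ^ 2 :=
                    pow_le_pow_of_le_one (norm_nonneg x) haxle hp
                _ = Complex.normSq x := Complex.sq_norm x
            exact mul_le_mul hpM h1' (pow_nonneg (norm_nonneg x) p) hM0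
          have Typ : (q : ℝ) * ‖(y ^ q)‖ ≤ ((max p (max q r) : ℕ) : ℝ) * Complex.normSq y := by
            rw [norm_pow]
            have h1' : ‖y‖ ^ q ≤ Complex.normSq y := by
              calc ‖y‖ ^ q ≤ ‖y‖ ^ 2 :=
                    pow_le_pow_of_le_one (norm_nonneg y) hayle hq
                _ = Complex.normSq y := Complex.sq_norm y
            exact mul_le_mul hqM h1' (pow_nonneg (norm_nonneg y) q) hM0
          have Tzp : (r : ℝ) * ‖(z ^ r)‖ ≤ ((max p (max q r) : ℕ) : ℝ) * Complex.normSq z := by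
            rw [norm_pow]
            have h1' : ‖z‖ ^ r ≤ Complex.normSq z := by
              calc ‖z‖ ^ r ≤ ‖z‖ ^ 2 :=
                    pow_le_pow_of_le_one (norm_nonneg z) hazle hr
                _ = Complex.normSq z := Complex.sq_norm z
            exact mul_le_mul hrM h1' (pow_nonneg (norm_nonneg z) r) hM0
          -- the three multiplied-out gradient equations
          have hxp : x ^ (p - 1) * x = x ^ p := by
            rw [← pow_succ]; congr 1; omega
          have hyq : y ^ (q - 1) * y = y ^ q := by
            rw [← pow_succ]; congr 1; omega
          have hzr : z ^ (r - 1) * z = z ^ r := by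
            rw [← pow_succ]; congr 1; omega
          have e1 : α * ((p : ℂ) * x ^ p + (a : ℂ) * x * y * z)
              + β * (Complex.normSq x : ℂ) = 0 := by
            linear_combination x * h1 - α * (p : ℂ) * hxp - β * Complex.mul_conj x
          have e2 : α * ((q : ℂ) * y ^ q + (a : ℂ) * x * y * z)
              + β * (Complex.normSq y : ℂ) = 0 := by
            linear_combination y * h2 - α * (q : ℂ) * hyq - β * Complex.mul_conj y
          have e3 : α * ((r : ℂ) * z ^ r + (a : ℂ) * x * y * z)
              + β * (Complex.normSq z : ℂ) = 0 := by
            linear_combination z * h3 - α * (r : ℂ) * hzr - β * Complex.mul_conj z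
          have hsC : ((Complex.normSq x : ℝ) : ℂ) + (Complex.normSq y : ℂ)
              + (Complex.normSq z : ℂ) = 1 := by exact_mod_cast hs
          have eS : α * ((p : ℂ) * x ^ p + (q : ℂ) * y ^ q + (r : ℂ) * z ^ r
              + 3 * ((a : ℂ) * x * y * z)) + β = 0 := by
            linear_combination e1 + e2 + e3 - β * hsC
          have hco1 := coord_ineq α β (x ^ p) ((a:ℂ)*x*y*z) p (Complex.normSq x) ((max p (max q r) : ℕ) : ℝ) hu0 e1 Txp
          have hco2 := coord_ineq α β (y ^ q) ((a:ℂ)*x*y*z) q (Complex.normSq y) ((max p (max q r) : ℕ) : ℝ) hv0 e2 Typ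
          have hco3 := coord_ineq α β (z ^ r) ((a:ℂ)*x*y*z) r (Complex.normSq z) ((max p (max q r) : ℕ) : ℝ) hw0 e3 Tzp
          have hBsum : ‖β‖ * (Complex.normSq x + Complex.normSq y + Complex.normSq z) = ‖β‖ := by
            rw [hs, mul_one]
          have hAMsum : ‖α‖ * (((max p (max q r) : ℕ) : ℝ) * (Complex.normSq x + Complex.normSq y + Complex.normSq z)) = ‖α‖ * ((max p (max q r) : ℕ) : ℝ) := by
            rw [hs, mul_one]
          have hB3 : ‖β‖ ≤ 3 * (‖α‖ * ‖((a:ℂ)*x*y*z)‖) + ‖α‖ * ((max p (max q r) : ℕ) : ℝ) := by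
            linarith [hco1.2, hco2.2, hco3.2, hBsum, hAMsum]
          have hμu : min (Complex.normSq x) (min (Complex.normSq y) (Complex.normSq z)) ≤ Complex.normSq x := min_le_left _ _
          have hμv : min (Complex.normSq x) (min (Complex.normSq y) (Complex.normSq z)) ≤ Complex.normSq y := le_trans (min_le_right _ _) (min_le_left _ _)
          have hμw : min (Complex.normSq x) (min (Complex.normSq y) (Complex.normSq z)) ≤ Complex.normSq z := le_trans (min_le_right _ _) (min_le_right _ _)
          have hμpos : 0 < min (Complex.normSq x) (min (Complex.normSq y) (Complex.normSq z)) := lt_min hupos (lt_min hvpos hwpos)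
          have hmem : min (Complex.normSq x) (min (Complex.normSq y) (Complex.normSq z)) = Complex.normSq x ∨ min (Complex.normSq x) (min (Complex.normSq y) (Complex.normSq z)) = Complex.normSq y ∨ min (Complex.normSq x) (min (Complex.normSq y) (Complex.normSq z)) = Complex.normSq z := by
            rcases min_choice (Complex.normSq x) (min (Complex.normSq y) (Complex.normSq z)) with h | h
            · exact Or.inl h
            · rcases min_choice (Complex.normSq y) (Complex.normSq z) with h2 | h2
              · exact Or.inr (Or.inl (h.trans h2))
              · exact Or.inr (Or.inr (h.trans h2))
          have hμR : ‖α‖ * ‖((a:ℂ)*x*y*z)‖ ≤ ‖β‖ * (min (Complex.normSq x) (min (Complex.normSq y) (Complex.normSq z))) + ‖α‖ * (((max p (max q r) : ℕ) : ℝ) * (min (Complex.normSq x) (min (Complex.normSq y) (Complex.normSq z)))) := by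
            rcases hmem with h | h | h <;> rw [h]
            · exact hco1.1
            · exact hco2.1
            · exact hco3.1
          have hμsq : (min (Complex.normSq x) (min (Complex.normSq y) (Complex.normSq z)))^2 ≤ 3 * (Complex.normSq x * Complex.normSq y * Complex.normSq z) := by
            rcases hmem with h | h | h
            · rw [h] at hμv hμw ⊢
              exact min_sq_le _ _ _ hupos hvpos hwpos hs hμv hμw
            · rw [h] at hμu hμw ⊢
              linarith [min_sq_le (Complex.normSq y) (Complex.normSq x) (Complex.normSq z) hvpos hupos hwpos (by linarith) hμu hμw]
            · rw [h] at hμu hμv ⊢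
              linarith [min_sq_le (Complex.normSq z) (Complex.normSq x) (Complex.normSq y) hwpos hupos hvpos (by linarith) hμu hμv]
          have hPr2 : (‖((a:ℂ)*x*y*z)‖)^2 = a^2 * (Complex.normSq x * Complex.normSq y * Complex.normSq z) := by
            rw [Complex.sq_norm]
            simp only [Complex.normSq_mul, Complex.normSq_ofReal]
            ring
          -- upper bound side
          have eT : α * ((p:ℂ)*(q:ℂ)*(r:ℂ)*t) = α * (((q:ℂ)*(r:ℂ)*(Complex.normSq x:ℂ) + (p:ℂ)*(r:ℂ)*(Complex.normSq y:ℂ) + (p:ℂ)*(q:ℂ)*(Complex.normSq z:ℂ)) * ((p:ℂ)*x^p + (q:ℂ)*y^q + (r:ℂ)*z^r) + (3*((q:ℂ)*(r:ℂ)*(Complex.normSq x:ℂ) + (p:ℂ)*(r:ℂ)*(Complex.normSq y:ℂ) + (p:ℂ)*(q:ℂ)*(Complex.normSq z:ℂ)) + ((p:ℂ)*(q:ℂ)*(r:ℂ) - ((q:ℂ)*(r:ℂ) + (p:ℂ)*(r:ℂ) + (p:ℂ)*(q:ℂ)))) * ((a:ℂ)*x*y*z)) := by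
            linear_combination (-(α*(p:ℂ)*(q:ℂ)*(r:ℂ))) * hf + (q:ℂ)*(r:ℂ) * e1 + (p:ℂ)*(r:ℂ) * e2 + (p:ℂ)*(q:ℂ) * e3 - ((q:ℂ)*(r:ℂ)*(Complex.normSq x:ℂ) + (p:ℂ)*(r:ℂ)*(Complex.normSq y:ℂ) + (p:ℂ)*(q:ℂ)*(Complex.normSq z:ℂ)) * eS
          have eT3 := mul_left_cancel₀ hα eT
          have eT4 : (((3*((q:ℝ)*r*Complex.normSq x + (p:ℝ)*r*Complex.normSq y + (p:ℝ)*q*Complex.normSq z) + ((p:ℝ)*q*r - ((q:ℝ)*r + (p:ℝ)*r + (p:ℝ)*q))) : ℝ) : ℂ) * ((a:ℂ)*x*y*z) = ((((p:ℝ)*q*r) : ℝ) : ℂ) * t - ((((q:ℝ)*r*Complex.normSq x + (p:ℝ)*r*Complex.normSq y + (p:ℝ)*q*Complex.normSq z) : ℝ) : ℂ) * ((p:ℂ)*x^p + (q:ℂ)*y^q + (r:ℂ)*z^r) := by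
            push_cast
            linear_combination -eT3
          have hS0 : 0 ≤ ((q:ℝ)*r*Complex.normSq x + (p:ℝ)*r*Complex.normSq y + (p:ℝ)*q*Complex.normSq z) := by
            have i1 := mul_nonneg (mul_nonneg hq0.le hr0.le) hu0
            have i2 := mul_nonneg (mul_nonneg hp0.le hr0.le) hv0
            have i3 := mul_nonneg (mul_nonneg hp0.le hq0.le) hw0
            linarith
          have hNr0 : (0:ℝ) < (p:ℝ)*q*r := by positivity
          have hK0 : 0 ≤ ((p:ℝ)*q*r - ((q:ℝ)*r + (p:ℝ)*r + (p:ℝ)*q)) := by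
            have e : (p:ℝ)*q*r*((1:ℝ)/p + 1/q + 1/r) = (q:ℝ)*r + (p:ℝ)*r + (p:ℝ)*q := by
              field_simp
            have h := mul_le_mul_of_nonneg_left hpqr hNr0.le
            rw [mul_one, e] at h
            linarith
          have h3SK : 0 ≤ 3*((q:ℝ)*r*Complex.normSq x + (p:ℝ)*r*Complex.normSq y + (p:ℝ)*q*Complex.normSq z) + ((p:ℝ)*q*r - ((q:ℝ)*r + (p:ℝ)*r + (p:ℝ)*q)) := by linarith
          have hG : ‖((p:ℂ)*x^p + (q:ℂ)*y^q + (r:ℂ)*z^r)‖ ≤ ((max p (max q r) : ℕ) : ℝ) := by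
            have t1 := norm_add_le ((p:ℂ)*x^p + (q:ℂ)*y^q) ((r:ℂ)*z^r)
            have t2 := norm_add_le ((p:ℂ)*x^p) ((q:ℂ)*y^q)
            simp only [norm_mul, Complex.norm_natCast] at t1 t2
            have hMRs : ((max p (max q r) : ℕ) : ℝ) * (Complex.normSq x + Complex.normSq y + Complex.normSq z) = ((max p (max q r) : ℕ) : ℝ) := by
              rw [hs, mul_one]
            linarith [Txp, Typ, Tzp, t1, t2, hMRs]
          have key1 : (3*((q:ℝ)*r*Complex.normSq x + (p:ℝ)*r*Complex.normSq y + (p:ℝ)*q*Complex.normSq z) + ((p:ℝ)*q*r - ((q:ℝ)*r + (p:ℝ)*r + (p:ℝ)*q))) * ‖((a:ℂ)*x*y*z)‖ ≤ ((p:ℝ)*q*r) * ‖t‖ + ((q:ℝ)*r*Complex.normSq x + (p:ℝ)*r*Complex.normSq y + (p:ℝ)*q*Complex.normSq z) * ((max p (max q r) : ℕ) : ℝ) := by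
            have c1 : ‖((((3*((q:ℝ)*r*Complex.normSq x + (p:ℝ)*r*Complex.normSq y + (p:ℝ)*q*Complex.normSq z) + ((p:ℝ)*q*r - ((q:ℝ)*r + (p:ℝ)*r + (p:ℝ)*q))) : ℝ) : ℂ) * ((a:ℂ)*x*y*z))‖ = (3*((q:ℝ)*r*Complex.normSq x + (p:ℝ)*r*Complex.normSq y + (p:ℝ)*q*Complex.normSq z) + ((p:ℝ)*q*r - ((q:ℝ)*r + (p:ℝ)*r + (p:ℝ)*q))) * ‖((a:ℂ)*x*y*z)‖ := by
              rw [norm_mul, Complex.norm_real, Real.norm_eq_abs, _root_.abs_of_nonneg h3SK]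
            rw [← c1, eT4]
            have c2 := abs_sub_le'' (((((p:ℝ)*q*r) : ℝ) : ℂ) * t) (((((q:ℝ)*r*Complex.normSq x + (p:ℝ)*r*Complex.normSq y + (p:ℝ)*q*Complex.normSq z) : ℝ) : ℂ) * ((p:ℂ)*x^p + (q:ℂ)*y^q + (r:ℂ)*z^r))
            rw [norm_mul, norm_mul, Complex.norm_real, Real.norm_eq_abs, Complex.norm_real, Real.norm_eq_abs, _root_.abs_of_nonneg hNr0.le, _root_.abs_of_nonneg hS0] at c2
            linarith [c2, mul_le_mul_of_nonneg_left hG hS0]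
          have hPc0 : 0 ≤ ‖((a:ℂ)*x*y*z)‖ := norm_nonneg _
          have hsN : (p:ℝ)*q*r*(Complex.normSq x + Complex.normSq y + Complex.normSq z) = (p:ℝ)*q*r := by
            rw [hs, mul_one]
          have hSM : (p:ℝ)*q*r ≤ ((max p (max q r) : ℕ) : ℝ) * ((q:ℝ)*r*Complex.normSq x + (p:ℝ)*r*Complex.normSq y + (p:ℝ)*q*Complex.normSq z) := by
            linarith [mul_nonneg (mul_nonneg (sub_nonneg.2 hpM) (mul_nonneg hq0.le hr0.le)) hu0,
              mul_nonneg (mul_nonneg (sub_nonneg.2 hqM) (mul_nonneg hp0.le hr0.le)) hv0,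
              mul_nonneg (mul_nonneg (sub_nonneg.2 hrM) (mul_nonneg hp0.le hq0.le)) hw0, hsN]
          have hSpos : 0 < ((q:ℝ)*r*Complex.normSq x + (p:ℝ)*r*Complex.normSq y + (p:ℝ)*q*Complex.normSq z) := by
            have i1 := mul_pos (mul_pos hq0 hr0) hupos
            have i2 := mul_nonneg (mul_nonneg hp0.le hr0.le) hv0
            have i3 := mul_nonneg (mul_nonneg hp0.le hq0.le) hw0
            linarith
          exact real_endgame a ((max p (max q r) : ℕ) : ℝ) (‖α‖) (‖β‖)
            (‖((a:ℂ)*x*y*z)‖)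
            ((q:ℝ)*r*Complex.normSq x + (p:ℝ)*r*Complex.normSq y + (p:ℝ)*q*Complex.normSq z)
            ((p:ℝ)*q*r - ((q:ℝ)*r + (p:ℝ)*r + (p:ℝ)*q))
            ((p:ℝ)*q*r) (‖t‖)
            (min (Complex.normSq x) (min (Complex.normSq y) (Complex.normSq z)))
            (Complex.normSq x * Complex.normSq y * Complex.normSq z)
            hM2 ha hApos (norm_nonneg β) (norm_nonneg _) ht1 hNr0 hK0 hSpos
            hB3 hμpos hμR hμsq hPr2 key1 hSM
  refine ⟨hα0, ?_⟩
  subst hα0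
  simp only [zero_mul, zero_add] at h1 h2 h3
  by_cases hβ : β = 0
  · exact hβ
  · exfalso
    have hx : x = 0 := by
      rcases mul_eq_zero.1 h1 with h | h
      · exact absurd h hβ
      · simpa using h
    have hy : y = 0 := by
      rcases mul_eq_zero.1 h2 with h | h
      · exact absurd h hβ
      · simpa using h
    have hz : z = 0 := by
      rcases mul_eq_zero.1 h3 with h | h
      · exact absurd h hβ
      · simpa using h
    rw [hx, hy, hz] at hs
    simp at hs
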